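/- Let C(n,m) be the caterpillar obtained from a path on n ≥ 3 spine vertices by attaching exactly m ≥ 1 pendant leaves to each spine vertex. Then the sigma index of C(n,m) equals 2m³ + m(m+1)²(n−2) + 2. -/
import Mathlib


open Finset

/-- Albertson irregularity index: sum over edges of |d(u) - d(v)|. -/
noncomputable def irr {V : Type*} [Fintype V] (G : SimpleGraph V) : ℝ :=
  letI := Classical.decEq V
  letI := Classical.decRel G.Adj
  ∑ e ∈ G.edgeFinset,
    Sym2.lift ⟨fun u v => |(G.degree u : ℝ) - (G.degree v : ℝ)|,
      fun u v => by simp [abs_sub_comm]⟩ e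

/-- Sigma index: sum over edges of (d(u) - d(v))². -/
noncomputable def sigmaIdx {V : Type*} [Fintype V] (G : SimpleGraph V) : ℝ :=
  letI := Classical.decEq V
  letI := Classical.decRel G.Adj
  ∑ e ∈ G.edgeFinset,
    Sym2.lift ⟨fun u v => ((G.degree u : ℝ) - (G.degree v : ℝ)) ^ 2,
      fun u v => by ring⟩ e

/-- The caterpillar C(n,m): a path on `n` spine vertices `(i, 0)`, each spine vertex
having `m` pendant leaves `(i, j)` for `j ≠ 0`. -/
def caterpillar (n m : ℕ) : SimpleGraph (Fin n × Fin (m + 1)) :=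
  SimpleGraph.fromRel (fun a b =>
    (a.2 = 0 ∧ b.2 = 0 ∧ a.1.val + 1 = b.1.val) ∨ (a.1 = b.1 ∧ a.2 = 0 ∧ b.2 ≠ 0))

/-! ### Auxiliary lemmas -/

lemma caterpillar_adj (n m : ℕ) (a b : Fin n × Fin (m + 1)) :
    (caterpillar n m).Adj a b ↔
      ((a.2.val = 0 ∧ b.2.val = 0 ∧ (a.1.val + 1 = b.1.val ∨ b.1.val + 1 = a.1.val)) ∨
       (a.1.val = b.1.val ∧ a.2.val = 0 ∧ b.2.val ≠ 0) ∨
       (a.1.val = b.1.val ∧ b.2.val = 0 ∧ a.2.val ≠ 0)) := by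
  simp only [caterpillar, SimpleGraph.fromRel_adj, Ne, Prod.ext_iff, Fin.ext_iff, Fin.val_zero]
  omega

lemma two_mul_sum_edges {V : Type*} [Fintype V] [DecidableEq V] (G : SimpleGraph V)
    [DecidableRel G.Adj] (f : Sym2 V → ℝ) :
    2 * ∑ e ∈ G.edgeFinset, f e = ∑ u : V, ∑ w : V, if G.Adj u w then f s(u, w) else 0 := by
  have h3 : ∑ d : G.Dart, f d.edge = ∑ e ∈ G.edgeFinset, 2 * f e := by
    rw [← Finset.sum_fiberwise_of_maps_to (g := SimpleGraph.Dart.edge)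
        (fun d _ => SimpleGraph.mem_edgeFinset.2 d.edge_mem) (fun d => f d.edge)]
    refine Finset.sum_congr rfl fun e he => ?_
    rw [Finset.sum_congr rfl (fun d hd => by rw [(Finset.mem_filter.1 hd).2]),
      Finset.sum_const, G.dart_edge_fiber_card e (SimpleGraph.mem_edgeFinset.1 he),
      two_smul]
    ring
  have h2 : ∑ d : G.Dart, f d.edge =
      ∑ p ∈ Finset.univ.filter (fun p : V × V => G.Adj p.1 p.2), f s(p.1, p.2) := by
    refine Finset.sum_bij' (fun d _ => d.toProd)
      (fun p hp => SimpleGraph.Dart.mk p (Finset.mem_filter.1 hp).2) ?_ ?_ ?_ ?_ ?_ <;>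
      simp [SimpleGraph.Dart.edge]
  rw [Finset.mul_sum, show (∑ e ∈ G.edgeFinset, 2 * f e) = ∑ d : G.Dart, f d.edge from h3.symm,
    h2, Finset.sum_filter, Fintype.sum_prod_type]

lemma two_mul_sigmaIdx {V : Type*} [Fintype V] [DecidableEq V] (G : SimpleGraph V)
    [DecidableRel G.Adj] :
    2 * sigmaIdx G =
      ∑ u : V, ∑ w : V, if G.Adj u w then ((G.degree u : ℝ) - G.degree w) ^ 2 else 0 := by
  rw [sigmaIdx, two_mul_sum_edges]
  refine Finset.sum_congr rfl fun u _ => Finset.sum_congr rfl fun w _ => ?_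
  split_ifs with h
  · simp only [Sym2.lift_mk]
    congr!
  · rfl

lemma sum_ite_ne {M : Type*} [NonAssocSemiring M] (m : ℕ) (c : M) :
    (∑ l ∈ range (m + 1), if l ≠ 0 then c else 0) = m * c := by
  rw [Finset.sum_ite, Finset.sum_const, Finset.sum_const_zero, add_zero, Finset.filter_ne',
    Finset.card_erase_of_mem (by simp), card_range, Nat.add_sub_cancel, nsmul_eq_mul]

lemma sum_ite_zero' {M : Type*} [AddCommMonoid M] (m : ℕ) (c : M) :
    (∑ l ∈ range (m + 1), if l = 0 then c else 0) = c := by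
  rw [Finset.sum_ite_eq' (range (m + 1)) 0 (fun _ => c), if_pos (by simp)]

lemma spine_nbr_count (n a : ℕ) (hn : 3 ≤ n) (ha : a < n) :
    (∑ k ∈ range n, if (a + 1 = k ∨ k + 1 = a) then (1 : ℕ) else 0) =
      if a = 0 ∨ a = n - 1 then 1 else 2 := by
  have split : ∀ k ∈ range n, (if (a + 1 = k ∨ k + 1 = a) then (1 : ℕ) else 0) =
      (if k = a + 1 then 1 else 0) + (if 1 ≤ a then (if k = a - 1 then 1 else 0) else 0) := by
    intro k _
    by_cases h1 : k = a + 1 <;> by_cases h2 : 1 ≤ a <;> by_cases h3 : k = a - 1 <;>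
      simp_all <;> omega
  rw [Finset.sum_congr rfl split, Finset.sum_add_distrib, Finset.sum_ite_eq' (range n)]
  by_cases h2 : 1 ≤ a
  · simp only [if_pos h2, Finset.sum_ite_eq' (range n), mem_range]
    split_ifs <;> omega
  · simp only [if_neg h2, Finset.sum_const_zero, mem_range]
    split_ifs <;> omega

lemma deg_count (n m : ℕ) (hn : 3 ≤ n) (a b : ℕ) (ha : a < n) (hb : b < m + 1) :
    (∑ k ∈ range n, ∑ l ∈ range (m + 1),
      if ((b = 0 ∧ l = 0 ∧ (a + 1 = k ∨ k + 1 = a)) ∨ (a = k ∧ b = 0 ∧ l ≠ 0) ∨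
          (a = k ∧ l = 0 ∧ b ≠ 0)) then (1 : ℕ) else 0) =
      if b = 0 then (if a = 0 ∨ a = n - 1 then m + 1 else m + 2) else 1 := by
  by_cases hb0 : b = 0
  · have step : ∀ k ∈ range n, (∑ l ∈ range (m + 1),
        if ((b = 0 ∧ l = 0 ∧ (a + 1 = k ∨ k + 1 = a)) ∨ (a = k ∧ b = 0 ∧ l ≠ 0) ∨
            (a = k ∧ l = 0 ∧ b ≠ 0)) then (1 : ℕ) else 0) =
        (if (a + 1 = k ∨ k + 1 = a) then 1 else 0) + (if a = k then m else 0) := by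
      intro k _
      have ptw : ∀ l ∈ range (m + 1),
          (if ((b = 0 ∧ l = 0 ∧ (a + 1 = k ∨ k + 1 = a)) ∨ (a = k ∧ b = 0 ∧ l ≠ 0) ∨
              (a = k ∧ l = 0 ∧ b ≠ 0)) then (1 : ℕ) else 0) =
          (if l = 0 then (if (a + 1 = k ∨ k + 1 = a) then 1 else 0) else 0) +
          (if l ≠ 0 then (if a = k then 1 else 0) else 0) := by
        intro l _; split_ifs <;> omega
      rw [Finset.sum_congr rfl ptw, Finset.sum_add_distrib, sum_ite_zero', sum_ite_ne]
      split_ifs <;> simp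
    rw [Finset.sum_congr rfl step, Finset.sum_add_distrib, spine_nbr_count n a hn ha,
      Finset.sum_ite_eq (range n) a (fun _ => m), if_pos (mem_range.2 ha), if_pos hb0]
    split_ifs <;> omega
  · have step : ∀ k ∈ range n, (∑ l ∈ range (m + 1),
        if ((b = 0 ∧ l = 0 ∧ (a + 1 = k ∨ k + 1 = a)) ∨ (a = k ∧ b = 0 ∧ l ≠ 0) ∨
            (a = k ∧ l = 0 ∧ b ≠ 0)) then (1 : ℕ) else 0) =
        if k = a then 1 else 0 := by
      intro k _
      have ptw : ∀ l ∈ range (m + 1),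
          (if ((b = 0 ∧ l = 0 ∧ (a + 1 = k ∨ k + 1 = a)) ∨ (a = k ∧ b = 0 ∧ l ≠ 0) ∨
              (a = k ∧ l = 0 ∧ b ≠ 0)) then (1 : ℕ) else 0) =
          (if l = 0 then (if k = a then 1 else 0) else 0) := by
        intro l _; split_ifs <;> omega
      rw [Finset.sum_congr rfl ptw, sum_ite_zero']
    rw [Finset.sum_congr rfl step, Finset.sum_ite_eq' (range n) a (fun _ => 1),
      if_pos (mem_range.2 ha), if_neg hb0]

lemma caterpillar_degree (n m : ℕ) (hn : 3 ≤ n) [DecidableRel (caterpillar n m).Adj]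
    (v : Fin n × Fin (m + 1)) :
    (caterpillar n m).degree v =
      if v.2.val = 0 then (if v.1.val = 0 ∨ v.1.val = n - 1 then m + 1 else m + 2) else 1 := by
  classical
  have h1 : (caterpillar n m).degree v = ∑ w : Fin n × Fin (m + 1),
      if (caterpillar n m).Adj v w then 1 else 0 := by
    rw [← SimpleGraph.card_neighborFinset_eq_degree, SimpleGraph.neighborFinset_eq_filter,
      Finset.card_filter]
  have h2 : ∀ (k : Fin n) (l : Fin (m + 1)),
      (if (caterpillar n m).Adj v (k, l) then (1 : ℕ) else 0) =
      if ((v.2.val = 0 ∧ l.val = 0 ∧ (v.1.val + 1 = k.val ∨ k.val + 1 = v.1.val)) ∨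
          (v.1.val = k.val ∧ v.2.val = 0 ∧ l.val ≠ 0) ∨
          (v.1.val = k.val ∧ l.val = 0 ∧ v.2.val ≠ 0)) then 1 else 0 :=
    fun k l => if_congr (caterpillar_adj n m v (k, l)) rfl rfl
  rw [h1, Fintype.sum_prod_type,
    Finset.sum_congr rfl (fun k _ => Finset.sum_congr rfl (fun l _ => h2 k l)),
    Finset.sum_congr rfl (fun (k : Fin n) _ => Fin.sum_univ_eq_sum_range
      (fun L => if ((v.2.val = 0 ∧ L = 0 ∧ (v.1.val + 1 = k.val ∨ k.val + 1 = v.1.val)) ∨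
        (v.1.val = k.val ∧ v.2.val = 0 ∧ L ≠ 0) ∨
        (v.1.val = k.val ∧ L = 0 ∧ v.2.val ≠ 0)) then 1 else 0) (m + 1)),
    Fin.sum_univ_eq_sum_range
      (fun K => ∑ L ∈ range (m + 1), if ((v.2.val = 0 ∧ L = 0 ∧ (v.1.val + 1 = K ∨ K + 1 = v.1.val)) ∨
        (v.1.val = K ∧ v.2.val = 0 ∧ L ≠ 0) ∨
        (v.1.val = K ∧ L = 0 ∧ v.2.val ≠ 0)) then 1 else 0) n,
    deg_count n m hn v.1.val v.2.val v.1.isLt v.2.isLt]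

noncomputable def dR (n m : ℕ) (i j : ℕ) : ℝ :=
  if j = 0 then (if i = 0 ∨ i = n - 1 then (m : ℝ) + 1 else (m : ℝ) + 2) else 1

lemma sum_ite_ne' (m : ℕ) (c : ℝ) :
    (∑ l ∈ range (m + 1), if l ≠ 0 then c else 0) = m * c := by
  rw [Finset.sum_ite, Finset.sum_const, Finset.sum_const_zero, add_zero, Finset.filter_ne',
    Finset.card_erase_of_mem (by simp), card_range, Nat.add_sub_cancel, nsmul_eq_mul]

lemma eval_pair (n m : ℕ) (hn : 3 ≤ n) (i : ℕ) (hi : i < n) :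
    (if i + 1 ∈ range n then (dR n m i 0 - dR n m (i + 1) 0) ^ 2 else 0) =
      if i = 0 ∨ i = n - 2 then 1 else 0 := by
  simp only [mem_range, dR]
  split_ifs <;> (try simp_all only [false_or, or_false]) <;> first | omega | ring_nf

lemma eval_pair' (n m : ℕ) (hn : 3 ≤ n) (k : ℕ) (hk : k < n) :
    (if k + 1 ∈ range n then (dR n m (k + 1) 0 - dR n m k 0) ^ 2 else 0) =
      if k = 0 ∨ k = n - 2 then 1 else 0 := by
  simp only [mem_range, dR]
  split_ifs <;> (try simp_all only [false_or, or_false]) <;> first | omega | ring_nf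

lemma two_count (n : ℕ) (hn : 3 ≤ n) :
    (∑ i ∈ range n, if i = 0 ∨ i = n - 2 then (1 : ℝ) else 0) = 2 := by
  have ptw : ∀ i ∈ range n, (if i = 0 ∨ i = n - 2 then (1 : ℝ) else 0) =
      (if i = 0 then (1 : ℝ) else 0) + (if i = n - 2 then (1 : ℝ) else 0) := by
    intro i _; split_ifs <;> first | omega | simp
  rw [Finset.sum_congr rfl ptw, Finset.sum_add_distrib,
    Finset.sum_ite_eq' (range n) 0 (fun _ => (1 : ℝ)),
    Finset.sum_ite_eq' (range n) (n - 2) (fun _ => (1 : ℝ)),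
    if_pos (mem_range.2 (by omega)), if_pos (mem_range.2 (by omega))]
  norm_num

lemma spine_sum (n m : ℕ) (hn : 3 ≤ n) :
    (∑ i ∈ range n, ∑ k ∈ range n, if (i + 1 = k ∨ k + 1 = i)
        then (dR n m i 0 - dR n m k 0) ^ 2 else 0) = 4 := by
  have ptw : ∀ i ∈ range n, ∀ k ∈ range n, (if (i + 1 = k ∨ k + 1 = i)
        then (dR n m i 0 - dR n m k 0) ^ 2 else 0) =
      (if k = i + 1 then (dR n m i 0 - dR n m k 0) ^ 2 else 0) +
      (if i = k + 1 then (dR n m i 0 - dR n m k 0) ^ 2 else 0) := by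
    intro i _ k _; split_ifs <;> first | omega | simp
  rw [Finset.sum_congr rfl (fun i hi => Finset.sum_congr rfl (fun k hk => ptw i hi k hk))]
  have expand : ∀ i ∈ range n, (∑ k ∈ range n,
      ((if k = i + 1 then (dR n m i 0 - dR n m k 0) ^ 2 else 0) +
       (if i = k + 1 then (dR n m i 0 - dR n m k 0) ^ 2 else 0))) =
      (∑ k ∈ range n, if k = i + 1 then (dR n m i 0 - dR n m k 0) ^ 2 else 0) +
      (∑ k ∈ range n, if i = k + 1 then (dR n m i 0 - dR n m k 0) ^ 2 else 0) := by
    intro i _; rw [Finset.sum_add_distrib]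
  rw [Finset.sum_congr rfl expand, Finset.sum_add_distrib]
  have hA : (∑ i ∈ range n, ∑ k ∈ range n,
      if k = i + 1 then (dR n m i 0 - dR n m k 0) ^ 2 else 0) = 2 := by
    have : ∀ i ∈ range n, (∑ k ∈ range n,
        if k = i + 1 then (dR n m i 0 - dR n m k 0) ^ 2 else 0) =
        if i = 0 ∨ i = n - 2 then 1 else 0 := by
      intro i hi
      rw [Finset.sum_ite_eq' (range n) (i + 1) (fun k => (dR n m i 0 - dR n m k 0) ^ 2)]
      exact eval_pair n m hn i (mem_range.1 hi)
    rw [Finset.sum_congr rfl this, two_count n hn]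
  have hB : (∑ i ∈ range n, ∑ k ∈ range n,
      if i = k + 1 then (dR n m i 0 - dR n m k 0) ^ 2 else 0) = 2 := by
    rw [Finset.sum_comm]
    have : ∀ k ∈ range n, (∑ i ∈ range n,
        if i = k + 1 then (dR n m i 0 - dR n m k 0) ^ 2 else 0) =
        if k = 0 ∨ k = n - 2 then 1 else 0 := by
      intro k hk
      rw [Finset.sum_ite_eq' (range n) (k + 1) (fun i => (dR n m i 0 - dR n m k 0) ^ 2)]
      exact eval_pair' n m hn k (mem_range.1 hk)
    rw [Finset.sum_congr rfl this, two_count n hn]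
  rw [hA, hB]; norm_num

lemma filter_pair_card (N x y : ℕ) (hx : x < N) (hy : y < N) (hxy : x ≠ y) :
    ((range N).filter (fun k => k = x ∨ k = y)).card = 2 := by
  have : (range N).filter (fun k => k = x ∨ k = y) = {x, y} := by
    ext k; simp only [mem_filter, mem_range, mem_insert, mem_singleton]; omega
  rw [this, card_insert_of_notMem (by simpa), card_singleton]

lemma w_sum (n m : ℕ) (hn : 3 ≤ n) :
    (∑ i ∈ range n, (dR n m i 0 - 1) ^ 2) =
      2 * (m : ℝ) ^ 2 + ((n : ℝ) - 2) * ((m : ℝ) + 1) ^ 2 := by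
  have ptw : ∀ i ∈ range n, (dR n m i 0 - 1) ^ 2 =
      if i = 0 ∨ i = n - 1 then ((m : ℝ)) ^ 2 else ((m : ℝ) + 1) ^ 2 := by
    intro i _; simp only [dR, if_pos rfl]; split_ifs <;> ring
  rw [Finset.sum_congr rfl ptw, Finset.sum_ite, Finset.sum_const, Finset.sum_const]
  have h1 : ((range n).filter (fun i => i = 0 ∨ i = n - 1)).card = 2 :=
    filter_pair_card n 0 (n - 1) (by omega) (by omega) (by omega)
  have h0 := Finset.card_filter_add_card_filter_not
    (s := range n) (p := fun i => i = 0 ∨ i = n - 1)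
  rw [card_range, h1] at h0
  have h2 : ((range n).filter (fun i => ¬(i = 0 ∨ i = n - 1))).card = n - 2 := by omega
  rw [h1, h2, nsmul_eq_mul, nsmul_eq_mul]
  have : ((n - 2 : ℕ) : ℝ) = (n : ℝ) - 2 := by
    push_cast [Nat.cast_sub (by omega : 2 ≤ n)]; ring
  rw [this]; push_cast; ring

lemma sum_ite_const' (p : Prop) [Decidable p] (s : Finset ℕ) (f : ℕ → ℝ) :
    (∑ k ∈ s, if p then f k else 0) = if p then (∑ k ∈ s, f k) else 0 := by
  split_ifs <;> simp

lemma sigma_count (n m : ℕ) (hn : 3 ≤ n) :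
    (∑ i ∈ range n, ∑ j ∈ range (m + 1), ∑ k ∈ range n, ∑ l ∈ range (m + 1),
      if ((j = 0 ∧ l = 0 ∧ (i + 1 = k ∨ k + 1 = i)) ∨ (i = k ∧ j = 0 ∧ l ≠ 0) ∨
          (i = k ∧ l = 0 ∧ j ≠ 0)) then (dR n m i j - dR n m k l) ^ 2 else 0)
    = 4 + 2 * (m : ℝ) * (2 * (m : ℝ) ^ 2 + ((n : ℝ) - 2) * ((m : ℝ) + 1) ^ 2) := by
  have inner : ∀ i ∈ range n, ∀ j ∈ range (m + 1),
      (∑ k ∈ range n, ∑ l ∈ range (m + 1),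
        if ((j = 0 ∧ l = 0 ∧ (i + 1 = k ∨ k + 1 = i)) ∨ (i = k ∧ j = 0 ∧ l ≠ 0) ∨
            (i = k ∧ l = 0 ∧ j ≠ 0)) then (dR n m i j - dR n m k l) ^ 2 else 0) =
      (if j = 0 then ((∑ k ∈ range n, if (i + 1 = k ∨ k + 1 = i)
          then (dR n m i 0 - dR n m k 0) ^ 2 else 0) + (m : ℝ) * (dR n m i 0 - 1) ^ 2)
        else (dR n m i 0 - 1) ^ 2) := by
    intro i hi j hj
    have lsum : ∀ k ∈ range n, (∑ l ∈ range (m + 1),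
        if ((j = 0 ∧ l = 0 ∧ (i + 1 = k ∨ k + 1 = i)) ∨ (i = k ∧ j = 0 ∧ l ≠ 0) ∨
            (i = k ∧ l = 0 ∧ j ≠ 0)) then (dR n m i j - dR n m k l) ^ 2 else 0) =
        (if j = 0 then (if (i + 1 = k ∨ k + 1 = i)
            then (dR n m i j - dR n m k 0) ^ 2 else 0) else 0) +
        (if i = k then (if j = 0 then (m : ℝ) * (dR n m i j - 1) ^ 2 else 0) else 0) +
        (if i = k then (if j ≠ 0 then (dR n m i j - dR n m k 0) ^ 2 else 0) else 0) := by
      intro k hk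
      have ptw : ∀ l ∈ range (m + 1),
          (if ((j = 0 ∧ l = 0 ∧ (i + 1 = k ∨ k + 1 = i)) ∨ (i = k ∧ j = 0 ∧ l ≠ 0) ∨
              (i = k ∧ l = 0 ∧ j ≠ 0)) then (dR n m i j - dR n m k l) ^ 2 else 0) =
          (if l = 0 then (if j = 0 then (if (i + 1 = k ∨ k + 1 = i)
              then (dR n m i j - dR n m k l) ^ 2 else 0) else 0) else 0) +
          (if l ≠ 0 then (if i = k then (if j = 0 then (dR n m i j - 1) ^ 2 else 0) else 0)
            else 0) +
          (if l = 0 then (if i = k then (if j ≠ 0 then (dR n m i j - dR n m k l) ^ 2 else 0)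
            else 0) else 0) := by
        intro l hl
        by_cases hl0 : l = 0 <;> by_cases hik : i = k <;> by_cases hj0 : j = 0 <;>
          by_cases hP : (i + 1 = k ∨ k + 1 = i) <;>
          simp_all [dR] <;> first | omega | ring
      rw [Finset.sum_congr rfl ptw, Finset.sum_add_distrib, Finset.sum_add_distrib,
        Finset.sum_ite_eq' (range (m + 1)) 0, Finset.sum_ite_eq' (range (m + 1)) 0,
        sum_ite_ne', if_pos (mem_range.2 (by omega : (0:ℕ) < m + 1)),
        if_pos (mem_range.2 (by omega : (0:ℕ) < m + 1))]
      split_ifs <;> ring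
    rw [Finset.sum_congr rfl lsum, Finset.sum_add_distrib, Finset.sum_add_distrib,
      Finset.sum_ite_eq (range n) i, Finset.sum_ite_eq (range n) i,
      if_pos hi, if_pos hi, sum_ite_const' (j = 0) (range n)]
    by_cases hj0 : j = 0
    · subst hj0; simp
    · have h1 : dR n m i j = 1 := by simp [dR, hj0]
      simp [hj0, h1]
      ring
  rw [Finset.sum_congr rfl (fun i hi => Finset.sum_congr rfl (fun j hj => inner i hi j hj))]
  have jsum : ∀ i ∈ range n, (∑ j ∈ range (m + 1),
      if j = 0 then ((∑ k ∈ range n, if (i + 1 = k ∨ k + 1 = i)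
          then (dR n m i 0 - dR n m k 0) ^ 2 else 0) + (m : ℝ) * (dR n m i 0 - 1) ^ 2)
        else (dR n m i 0 - 1) ^ 2) =
      (∑ k ∈ range n, if (i + 1 = k ∨ k + 1 = i)
          then (dR n m i 0 - dR n m k 0) ^ 2 else 0) +
      (2 * (m : ℝ)) * (dR n m i 0 - 1) ^ 2 := by
    intro i hi
    rw [Finset.sum_ite, Finset.sum_const, Finset.sum_const, Finset.filter_eq',
      if_pos (mem_range.2 (by omega : (0:ℕ) < m + 1)), card_singleton, one_smul]
    have h2 : (range (m + 1)).filter (fun j => ¬j = 0) = (range (m + 1)).erase 0 := by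
      rw [Finset.filter_ne']
    rw [h2, Finset.card_erase_of_mem (mem_range.2 (by omega : (0:ℕ) < m + 1)), card_range,
      Nat.add_sub_cancel, nsmul_eq_mul]
    ring
  rw [Finset.sum_congr rfl jsum, Finset.sum_add_distrib, spine_sum n m hn,
    ← Finset.mul_sum, w_sum n m hn]
  try ring

lemma quad_range (n m : ℕ) (F : ℕ → ℕ → ℕ → ℕ → ℝ) :
    (∑ i : Fin n, ∑ j : Fin (m + 1), ∑ k : Fin n, ∑ l : Fin (m + 1),
        F i.val j.val k.val l.val)
      = ∑ i ∈ range n, ∑ j ∈ range (m + 1), ∑ k ∈ range n, ∑ l ∈ range (m + 1), F i j k l := by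
  rw [Fin.sum_univ_eq_sum_range (fun I => ∑ j : Fin (m + 1), ∑ k : Fin n, ∑ l : Fin (m + 1),
    F I j.val k.val l.val) n]
  refine Finset.sum_congr rfl fun i _ => ?_
  rw [Fin.sum_univ_eq_sum_range (fun J => ∑ k : Fin n, ∑ l : Fin (m + 1), F i J k.val l.val)
    (m + 1)]
  refine Finset.sum_congr rfl fun j _ => ?_
  rw [Fin.sum_univ_eq_sum_range (fun K => ∑ l : Fin (m + 1), F i j K l.val) n]
  refine Finset.sum_congr rfl fun k _ => ?_
  exact Fin.sum_univ_eq_sum_range (fun L => F i j k L) (m + 1)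

theorem sigma_caterpillar (n m : ℕ) (hn : 3 ≤ n) (hm : 1 ≤ m) :
    sigmaIdx (caterpillar n m) =
      2 * (m : ℝ) ^ 3 + (m : ℝ) * ((m : ℝ) + 1) ^ 2 * ((n : ℝ) - 2) + 2 := by
  classical
  have key := two_mul_sigmaIdx (caterpillar n m)
  have hdeg : ∀ v : Fin n × Fin (m + 1),
      (((caterpillar n m).degree v : ℕ) : ℝ) = dR n m v.1.val v.2.val := by
    intro v
    rw [caterpillar_degree n m hn v, dR]
    split_ifs <;> push_cast <;> ring
  have hstep : ∀ (u w : Fin n × Fin (m + 1)),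
      (if (caterpillar n m).Adj u w
        then (((caterpillar n m).degree u : ℝ) - (caterpillar n m).degree w) ^ 2 else 0) =
      if ((u.2.val = 0 ∧ w.2.val = 0 ∧ (u.1.val + 1 = w.1.val ∨ w.1.val + 1 = u.1.val)) ∨
          (u.1.val = w.1.val ∧ u.2.val = 0 ∧ w.2.val ≠ 0) ∨
          (u.1.val = w.1.val ∧ w.2.val = 0 ∧ u.2.val ≠ 0))
        then (dR n m u.1.val u.2.val - dR n m w.1.val w.2.val) ^ 2 else 0 :=
    fun u w => if_congr (caterpillar_adj n m u w) (by rw [hdeg, hdeg]) rfl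
  rw [Finset.sum_congr rfl (fun u _ => Finset.sum_congr rfl (fun w _ => hstep u w))] at key
  simp only [Fintype.sum_prod_type] at key
  have key2 : 2 * sigmaIdx (caterpillar n m) =
      ∑ i ∈ range n, ∑ j ∈ range (m + 1), ∑ k ∈ range n, ∑ l ∈ range (m + 1),
        if ((j = 0 ∧ l = 0 ∧ (i + 1 = k ∨ k + 1 = i)) ∨ (i = k ∧ j = 0 ∧ l ≠ 0) ∨
            (i = k ∧ l = 0 ∧ j ≠ 0)) then (dR n m i j - dR n m k l) ^ 2 else 0 :=
    key.trans (quad_range n m (fun i j k l =>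
      if ((j = 0 ∧ l = 0 ∧ (i + 1 = k ∨ k + 1 = i)) ∨ (i = k ∧ j = 0 ∧ l ≠ 0) ∨
          (i = k ∧ l = 0 ∧ j ≠ 0)) then (dR n m i j - dR n m k l) ^ 2 else 0))
  rw [sigma_count n m hn] at key2
  have expand : (2 : ℝ) * (2 * (m : ℝ) ^ 3 + (m : ℝ) * ((m : ℝ) + 1) ^ 2 * ((n : ℝ) - 2) + 2) =
      4 + 2 * (m : ℝ) * (2 * (m : ℝ) ^ 2 + ((n : ℝ) - 2) * ((m : ℝ) + 1) ^ 2) := by ring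
  linarith
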